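/- arXiv:1905.10961 — 2 statements merged into one kernel-verified Lean document; each statement's English description precedes it below -/
import Mathlib

section
/- Suppose Conditions 1 and 2 hold with 0 ≤ C < 1/2 and NGD is run with step size 0 < η ≤ (1-2C)/(1+C)². If for every s = 0, …, k one has λmin(G(s)) ≥ (4/9)·λmin(G(0)) and ‖y - u(s)‖₂ ≤ (1-η)^{s/2}·‖y - u(0)‖₂, then ‖θ(k+1) - θ(0)‖₂ ≤ 3‖y - u(0)‖₂ / √λmin(G(0)). -/
open Matrix MeasureTheory ProbabilityTheory Real
open scoped BigOperators ENNReal NNReal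

/-- Euclidean norm of a finitely-indexed real vector. -/
noncomputable def enorm2 {ι : Type*} [Fintype ι] (v : ι → ℝ) : ℝ :=
  Real.sqrt (∑ i, v i * v i)

/-- Euclidean norm of a vector in `Fin n → ℝ`. -/
noncomputable def vnorm {n : ℕ} (v : Fin n → ℝ) : ℝ := Real.sqrt (v ⬝ᵥ v)

/-- Spectral norm (ℓ²-operator norm) of a matrix. -/
noncomputable def specNorm {ι κ : Type*} [Fintype ι] [Fintype κ] (A : Matrix ι κ ℝ) : ℝ :=
  sSup {r : ℝ | ∃ v : κ → ℝ, enorm2 v = 1 ∧ r = enorm2 (A *ᵥ v)}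

/-- Smallest eigenvalue of a symmetric matrix, via the Rayleigh quotient. -/
noncomputable def lamMin {n : ℕ} (A : Matrix (Fin n) (Fin n) ℝ) : ℝ :=
  sInf {r : ℝ | ∃ v : Fin n → ℝ, vnorm v = 1 ∧ r = v ⬝ᵥ (A *ᵥ v)}

/-- Largest eigenvalue of a symmetric matrix, via the Rayleigh quotient. -/
noncomputable def lamMax {n : ℕ} (A : Matrix (Fin n) (Fin n) ℝ) : ℝ :=
  sSup {r : ℝ | ∃ v : Fin n → ℝ, vnorm v = 1 ∧ r = v ⬝ᵥ (A *ᵥ v)}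

/-- Natural gradient descent iterates for a network with outputs `u`, Jacobian `J`,
targets `y`, step size `η`, starting at `θ0`. -/
noncomputable def ngd {n p : ℕ} (J : (Fin p → ℝ) → Matrix (Fin n) (Fin p) ℝ)
    (u : (Fin p → ℝ) → Fin n → ℝ) (y : Fin n → ℝ) (η : ℝ) (θ0 : Fin p → ℝ) :
    ℕ → Fin p → ℝ
  | 0 => θ0
  | k + 1 =>
      ngd J u y η θ0 k -
        η • ((J (ngd J u y η θ0 k))ᵀ *ᵥ
          ((J (ngd J u y η θ0 k) * (J (ngd J u y η θ0 k))ᵀ)⁻¹ *ᵥ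
            (u (ngd J u y η θ0 k) - y)))

noncomputable def toE {m : ℕ} : (Fin m → ℝ) ≃ₗ[ℝ] EuclideanSpace ℝ (Fin m) :=
  (WithLp.linearEquiv 2 ℝ (Fin m → ℝ)).symm

lemma dot_eq_inner {m : ℕ} (v w : Fin m → ℝ) :
    v ⬝ᵥ w = inner ℝ (toE v) (toE w) := by
  simp [toE, dotProduct, PiLp.inner_apply, RCLike.inner_apply, conj_trivial,
    WithLp.linearEquiv, mul_comm]

lemma vnorm_eq {m : ℕ} (v : Fin m → ℝ) : vnorm v = ‖toE v‖ := by
  rw [vnorm, EuclideanSpace.norm_eq]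
  congr 1
  refine Finset.sum_congr rfl fun i _ => ?_
  simp [toE, WithLp.linearEquiv, Real.norm_eq_abs, sq_abs, sq]

lemma dot_self_pos {m : ℕ} {v : Fin m → ℝ} (hv : v ≠ 0) : 0 < v ⬝ᵥ v := by
  rw [dot_eq_inner, real_inner_self_eq_norm_sq]
  have h : toE v ≠ 0 := by simpa using (toE.map_ne_zero_iff).mpr hv
  exact pow_pos (norm_pos_iff.mpr h) 2

lemma toE_mulVec {m n : ℕ} (A : Matrix (Fin m) (Fin n) ℝ) (v : Fin n → ℝ) :
    toE (A *ᵥ v) = (Matrix.toEuclideanLin A).toContinuousLinearMap (toE v) := rfl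

lemma rayleigh_bddBelow {n : ℕ} (A : Matrix (Fin n) (Fin n) ℝ) :
    BddBelow {r : ℝ | ∃ v : Fin n → ℝ, vnorm v = 1 ∧ r = v ⬝ᵥ (A *ᵥ v)} := by
  classical
  set L := (Matrix.toEuclideanLin A).toContinuousLinearMap with hL
  refine ⟨-‖L‖, ?_⟩
  rintro r ⟨v, hv, rfl⟩
  have hx : ‖toE v‖ = 1 := by rw [← vnorm_eq, hv]
  have h2 : |(inner ℝ (toE v) (L (toE v)) : ℝ)| ≤ ‖L‖ := by
    calc |(inner ℝ (toE v) (L (toE v)) : ℝ)| ≤ ‖toE v‖ * ‖L (toE v)‖ := abs_real_inner_le_norm _ _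
    _ ≤ ‖toE v‖ * (‖L‖ * ‖toE v‖) := by gcongr; exact L.le_opNorm _
    _ = ‖L‖ := by rw [hx]; ring
  have h1 : v ⬝ᵥ A *ᵥ v = inner ℝ (toE v) (L (toE v)) := by
    rw [dot_eq_inner, toE_mulVec, hL]
  rw [h1]
  exact neg_le_of_abs_le h2

lemma rayleigh_le {n : ℕ} (A : Matrix (Fin n) (Fin n) ℝ) (v : Fin n → ℝ) (hv : vnorm v = 1) :
    lamMin A ≤ v ⬝ᵥ (A *ᵥ v) :=
  csInf_le (rayleigh_bddBelow A) ⟨v, hv, rfl⟩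

lemma rayleigh_lower {n : ℕ} (A : Matrix (Fin n) (Fin n) ℝ) (v : Fin n → ℝ) :
    lamMin A * (v ⬝ᵥ v) ≤ v ⬝ᵥ (A *ᵥ v) := by
  by_cases hv : v = 0
  · simp [hv]
  · have hvv : 0 < v ⬝ᵥ v := dot_self_pos hv
    set c : ℝ := vnorm v with hc
    have hc0 : 0 < c := Real.sqrt_pos.mpr hvv
    have hc2 : c ^ 2 = v ⬝ᵥ v := Real.sq_sqrt hvv.le
    have hw : vnorm (c⁻¹ • v) = 1 := by
      rw [vnorm_eq, _root_.map_smul, norm_smul, ← vnorm_eq, ← hc,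
        Real.norm_eq_abs, abs_inv, abs_of_pos hc0, inv_mul_cancel₀ hc0.ne']
    have h := rayleigh_le A (c⁻¹ • v) hw
    have hq : (c⁻¹ • v) ⬝ᵥ (A *ᵥ (c⁻¹ • v)) = c⁻¹ * c⁻¹ * (v ⬝ᵥ (A *ᵥ v)) := by
      rw [Matrix.mulVec_smul, dotProduct_smul, smul_dotProduct]
      simp [smul_eq_mul]; ring
    rw [hq] at h
    have h2 := mul_le_mul_of_nonneg_right h (le_of_lt (by positivity : (0:ℝ) < c ^ 2))
    calc lamMin A * (v ⬝ᵥ v) = lamMin A * c ^ 2 := by rw [hc2]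
    _ ≤ c⁻¹ * c⁻¹ * (v ⬝ᵥ (A *ᵥ v)) * c ^ 2 := h2
    _ = v ⬝ᵥ (A *ᵥ v) := by
        have : c⁻¹ * c⁻¹ * (v ⬝ᵥ (A *ᵥ v)) * c ^ 2 = (c⁻¹ * c)^2 * (v ⬝ᵥ (A *ᵥ v)) := by ring
        rw [this, inv_mul_cancel₀ hc0.ne']; ring

lemma lamMin_mem {n : ℕ} (hn : 0 < n) (A : Matrix (Fin n) (Fin n) ℝ) :
    lamMin A ∈ {r : ℝ | ∃ v : Fin n → ℝ, vnorm v = 1 ∧ r = v ⬝ᵥ (A *ᵥ v)} := by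
  classical
  set L := (Matrix.toEuclideanLin A).toContinuousLinearMap with hL
  set g : EuclideanSpace ℝ (Fin n) → ℝ := fun x => inner ℝ x (L x) with hg
  have hgc : Continuous g := (continuous_id.inner (L.continuous.comp continuous_id))
  have hset : {r : ℝ | ∃ v : Fin n → ℝ, vnorm v = 1 ∧ r = v ⬝ᵥ (A *ᵥ v)} =
      g '' (Metric.sphere (0 : EuclideanSpace ℝ (Fin n)) 1) := by
    ext r
    constructor
    · rintro ⟨v, hv, rfl⟩
      refine ⟨toE v, ?_, ?_⟩
      · rw [mem_sphere_zero_iff_norm, ← vnorm_eq, hv]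
      · rw [hg]; simp only; rw [← toE_mulVec, ← dot_eq_inner]
    · rintro ⟨x, hx, rfl⟩
      refine ⟨toE.symm x, ?_, ?_⟩
      · rw [vnorm_eq, toE.apply_symm_apply, ← mem_sphere_zero_iff_norm]; exact hx
      · rw [hg]; simp only
        rw [dot_eq_inner (toE.symm x), toE_mulVec, toE.apply_symm_apply]
  have hcpt : IsCompact (g '' (Metric.sphere (0 : EuclideanSpace ℝ (Fin n)) 1)) :=
    (isCompact_sphere _ _).image hgc
  have hne : (g '' (Metric.sphere (0 : EuclideanSpace ℝ (Fin n)) 1)).Nonempty := by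
    refine ⟨g (EuclideanSpace.single ⟨0, hn⟩ (1:ℝ)), ⟨_, ?_, rfl⟩⟩
    rw [mem_sphere_zero_iff_norm, EuclideanSpace.norm_single]; norm_num
  rw [lamMin, hset]
  exact hcpt.sInf_mem hne

lemma lamMin_pos {n : ℕ} (hn : 0 < n) {A : Matrix (Fin n) (Fin n) ℝ} (hA : A.PosDef) :
    0 < lamMin A := by
  obtain ⟨v, hv, heq⟩ := lamMin_mem hn A
  have hv0 : v ≠ 0 := by
    intro h; rw [h] at hv; simp [vnorm, zero_dotProduct] at hv
  have := hA.dotProduct_mulVec_pos hv0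
  rw [heq]
  simpa using this

lemma vnorm_nonneg {m : ℕ} (v : Fin m → ℝ) : 0 ≤ vnorm v := Real.sqrt_nonneg _

lemma vnorm_neg {m : ℕ} (v : Fin m → ℝ) : vnorm (-v) = vnorm v := by
  rw [vnorm_eq, vnorm_eq, map_neg, norm_neg]

lemma vnorm_smul {m : ℕ} (c : ℝ) (v : Fin m → ℝ) : vnorm (c • v) = |c| * vnorm v := by
  rw [vnorm_eq, vnorm_eq, _root_.map_smul, norm_smul, Real.norm_eq_abs]

lemma vnorm_sq {m : ℕ} (v : Fin m → ℝ) : vnorm v ^ 2 = v ⬝ᵥ v := by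
  rw [vnorm, Real.sq_sqrt]
  by_cases h : v = 0
  · simp [h]
  · exact (dot_self_pos h).le

lemma dd_eq {n p : ℕ} (J : Matrix (Fin n) (Fin p) ℝ) (w : Fin n → ℝ) :
    (Jᵀ *ᵥ w) ⬝ᵥ (Jᵀ *ᵥ w) = ((J * Jᵀ) *ᵥ w) ⬝ᵥ w := by
  rw [Matrix.dotProduct_mulVec, Matrix.vecMul_transpose, Matrix.mulVec_mulVec]

lemma cauchy_dot {m : ℕ} (v w : Fin m → ℝ) : (v ⬝ᵥ w) * (v ⬝ᵥ w) ≤ (v ⬝ᵥ v) * (w ⬝ᵥ w) := by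
  rw [dot_eq_inner v w, dot_eq_inner v v, dot_eq_inner w w]
  exact real_inner_mul_inner_self_le _ _


lemma step_norm_bound {n p : ℕ} (J : Matrix (Fin n) (Fin p) ℝ) (r : Fin n → ℝ)
    {lam0 : ℝ} (hl0 : 0 < lam0) (hls : 4/9 * lam0 ≤ lamMin (J * Jᵀ)) :
    vnorm (Jᵀ *ᵥ ((J * Jᵀ)⁻¹ *ᵥ r)) ≤ (3/2) * vnorm r / Real.sqrt lam0 := by
  have hlspos : 0 < lamMin (J * Jᵀ) := lt_of_lt_of_le (by nlinarith) hls
  have hherm : (J * Jᵀ).IsHermitian := by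
    show (J * Jᵀ)ᴴ = J * Jᵀ
    ext i j
    simp only [Matrix.conjTranspose_apply, Matrix.mul_apply, Matrix.transpose_apply,
      star_trivial]
    exact Finset.sum_congr rfl fun l _ => mul_comm _ _
  have hGpd : (J * Jᵀ).PosDef := by
    refine Matrix.PosDef.of_dotProduct_mulVec_pos hherm fun x hx => ?_
    have h1 := rayleigh_lower (J * Jᵀ) x
    have h2 := dot_self_pos hx
    have h3 : (0:ℝ) < lamMin (J * Jᵀ) * (x ⬝ᵥ x) := mul_pos hlspos h2
    simpa [star_trivial] using lt_of_lt_of_le h3 h1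
  have hdet : IsUnit (J * Jᵀ).det := hGpd.det_pos.ne'.isUnit
  set w := (J * Jᵀ)⁻¹ *ᵥ r with hwdef
  clear_value w
  set d := Jᵀ *ᵥ w with hddef
  clear_value d
  have hGw : (J * Jᵀ) *ᵥ w = r := by
    rw [hwdef, Matrix.mulVec_mulVec, Matrix.mul_nonsing_inv _ hdet, Matrix.one_mulVec]
  have hdd : d ⬝ᵥ d = r ⬝ᵥ w := by rw [hddef, dd_eq, hGw]
  have hray : lamMin (J * Jᵀ) * (w ⬝ᵥ w) ≤ r ⬝ᵥ w := by
    have h := rayleigh_lower (J * Jᵀ) w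
    rwa [show w ⬝ᵥ ((J * Jᵀ) *ᵥ w) = r ⬝ᵥ w by rw [hGw, dotProduct_comm]] at h
  have hww : 0 ≤ w ⬝ᵥ w := by rw [← vnorm_sq]; positivity
  have hrr : 0 ≤ r ⬝ᵥ r := by rw [← vnorm_sq]; positivity
  have ht0 : 0 ≤ r ⬝ᵥ w := le_trans (mul_nonneg hlspos.le hww) hray
  have hcs := cauchy_dot r w
  have hkey : r ⬝ᵥ w ≤ (r ⬝ᵥ r) / lamMin (J * Jᵀ) := by
    rcases eq_or_lt_of_le ht0 with h | h
    · rw [← h]; positivity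
    · rw [le_div_iff₀ hlspos]
      have k1 : lamMin (J * Jᵀ) * ((r ⬝ᵥ w) * (r ⬝ᵥ w)) ≤ (r ⬝ᵥ r) * (r ⬝ᵥ w) := by
        nlinarith [mul_le_mul_of_nonneg_left hcs hlspos.le,
          mul_le_mul_of_nonneg_left hray hrr]
      nlinarith [k1, h]
  have hbound : d ⬝ᵥ d ≤ (9/4) * (r ⬝ᵥ r) / lam0 := by
    rw [hdd]
    refine le_trans hkey ?_
    have h49 : (0:ℝ) < 4/9 * lam0 := by nlinarith
    calc (r ⬝ᵥ r) / lamMin (J * Jᵀ) ≤ (r ⬝ᵥ r) / (4/9 * lam0) :=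
          div_le_div_of_nonneg_left hrr h49 hls
    _ = (9/4) * (r ⬝ᵥ r) / lam0 := by field_simp
  show vnorm d ≤ _
  rw [vnorm]
  refine le_trans (Real.sqrt_le_sqrt hbound) ?_
  rw [show (9:ℝ)/4 * (r ⬝ᵥ r) / lam0 = (9/4) * ((r ⬝ᵥ r) / lam0) by ring,
    Real.sqrt_mul (by norm_num : (0:ℝ) ≤ 9/4),
    Real.sqrt_div hrr,
    show Real.sqrt (9/4) = 3/2 by
      rw [show (9:ℝ)/4 = (3/2)^2 by norm_num, Real.sqrt_sq (by norm_num)]]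
  rw [vnorm]
  ring_nf
  exact le_refl _

/-- **Lemma (iterates stay close to initialization).**
Under Conditions 1 and 2 with `0 ≤ C < 1/2` and step size `0 < η ≤ (1-2C)/(1+C)²`:
if for every `s = 0, …, k` the Gram matrix satisfies
`λmin(G(s)) ≥ (4/9) λmin(G(0))` and the residual satisfies
`‖y - u(s)‖ ≤ (1-η)^{s/2} ‖y - u(0)‖`, then
`‖θ(k+1) - θ(0)‖ ≤ 3 ‖y - u(0)‖ / √λmin(G(0))`. -/
theorem ngd_iterates_close_to_init {n p : ℕ}
    (u : (Fin p → ℝ) → Fin n → ℝ) (J : (Fin p → ℝ) → Matrix (Fin n) (Fin p) ℝ)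
    (hJ : ∀ θ, HasFDerivAt u (LinearMap.toContinuousLinearMap ((J θ).mulVecLin)) θ)
    (hJcont : Continuous J)
    (y : Fin n → ℝ) (θ0 : Fin p → ℝ)
    -- Condition 1
    (hG0 : (J θ0 * (J θ0)ᵀ).PosDef)
    -- Condition 2
    (C : ℝ) (hC0 : 0 ≤ C) (hC : C < 1 / 2)
    (hstab : ∀ θ : Fin p → ℝ,
      vnorm (θ - θ0) ≤ 3 * vnorm (y - u θ0) / Real.sqrt (lamMin (J θ0 * (J θ0)ᵀ)) →
      specNorm (J θ - J θ0) ≤ C / 3 * Real.sqrt (lamMin (J θ0 * (J θ0)ᵀ)))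
    (η : ℝ) (hη0 : 0 < η) (hη : η ≤ (1 - 2 * C) / (1 + C) ^ 2)
    (k : ℕ)
    (hGs : ∀ s : ℕ, s ≤ k →
      4 / 9 * lamMin (J θ0 * (J θ0)ᵀ) ≤
        lamMin (J (ngd J u y η θ0 s) * (J (ngd J u y η θ0 s))ᵀ))
    (hres : ∀ s : ℕ, s ≤ k →
      vnorm (y - u (ngd J u y η θ0 s)) ≤
        Real.sqrt ((1 - η) ^ s) * vnorm (y - u θ0)) :
    vnorm (ngd J u y η θ0 (k + 1) - θ0) ≤
      3 * vnorm (y - u θ0) / Real.sqrt (lamMin (J θ0 * (J θ0)ᵀ)) := by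
  have hRHS : 0 ≤ 3 * vnorm (y - u θ0) / Real.sqrt (lamMin (J θ0 * (J θ0)ᵀ)) :=
    div_nonneg (mul_nonneg (by norm_num) (vnorm_nonneg _)) (Real.sqrt_nonneg _)
  rcases Nat.eq_zero_or_pos n with hn | hn
  · subst hn
    have hzero : ∀ (M : Matrix (Fin p) (Fin 0) ℝ) (x : Fin 0 → ℝ), M *ᵥ x = 0 := by
      intro M x; funext j; simp [Matrix.mulVec, dotProduct]
    have hngd : ∀ m, ngd J u y η θ0 m = θ0 := by
      intro m
      induction m with
      | zero => rfl
      | succ m ih =>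
        show ngd J u y η θ0 m - η • _ = θ0
        rw [hzero, smul_zero, sub_zero, ih]
    rw [hngd, sub_self]
    simpa [vnorm] using hRHS
  -- main case
  set Θ : ℕ → Fin p → ℝ := ngd J u y η θ0 with hΘ
  set lam0 := lamMin (J θ0 * (J θ0)ᵀ) with hlam0def
  have hl0 : 0 < lam0 := lamMin_pos hn hG0
  set R0 := vnorm (y - u θ0) with hR0def
  have hR0 : 0 ≤ R0 := vnorm_nonneg _
  have hCp : (0:ℝ) < (1 + C)^2 := by positivity
  have hη1 : η ≤ 1 := le_trans hη (by rw [div_le_one hCp]; nlinarith)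
  set q := Real.sqrt (1 - η) with hqdef
  have hq0 : 0 ≤ q := Real.sqrt_nonneg _
  have hq2 : q ^ 2 = 1 - η := Real.sq_sqrt (by linarith)
  have hq1 : q ≤ 1 := by
    rw [hqdef]
    calc Real.sqrt (1 - η) ≤ Real.sqrt 1 := Real.sqrt_le_sqrt (by linarith)
    _ = 1 := Real.sqrt_one
  have hsl0 : 0 < Real.sqrt lam0 := Real.sqrt_pos.mpr hl0
  have step : ∀ s, s ≤ k →
      vnorm (Θ (s+1) - Θ s) ≤ η * ((3/2) * (q^s * R0) / Real.sqrt lam0) := by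
    intro s hs
    have hls : 4/9 * lam0 ≤ lamMin (J (Θ s) * (J (Θ s))ᵀ) := hGs s hs
    have hsb := step_norm_bound (J (Θ s)) (u (Θ s) - y) hl0 hls
    have hstep_eq : Θ (s+1) - Θ s =
        -(η • ((J (Θ s))ᵀ *ᵥ ((J (Θ s) * (J (Θ s))ᵀ)⁻¹ *ᵥ (u (Θ s) - y)))) := by
      show ngd J u y η θ0 (s+1) - ngd J u y η θ0 s = _
      show (ngd J u y η θ0 s - η • _) - ngd J u y η θ0 s = _
      rw [sub_sub_cancel_left]
    have hvr : vnorm (u (Θ s) - y) ≤ q^s * R0 := by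
      have h1 : vnorm (u (Θ s) - y) = vnorm (y - u (Θ s)) := by
        rw [show u (Θ s) - y = -(y - u (Θ s)) by ring, vnorm_neg]
      have h2 := hres s hs
      have h3 : Real.sqrt ((1-η)^s) = q^s := by
        rw [show (1-η)^s = (q^s)^2 by rw [← hq2]; ring, Real.sqrt_sq (pow_nonneg hq0 s)]
      rw [h1]; rw [h3] at h2; exact h2
    calc vnorm (Θ (s+1) - Θ s)
        = η * vnorm ((J (Θ s))ᵀ *ᵥ ((J (Θ s) * (J (Θ s))ᵀ)⁻¹ *ᵥ (u (Θ s) - y))) := by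
          rw [hstep_eq, vnorm_neg, vnorm_smul, abs_of_pos hη0]
    _ ≤ η * ((3/2) * (q^s * R0) / Real.sqrt lam0) := by
        refine mul_le_mul_of_nonneg_left (le_trans hsb ?_) hη0.le
        gcongr
  -- telescoping
  have tele : Θ (k+1) - θ0 = ∑ s ∈ Finset.range (k+1), (Θ (s+1) - Θ s) := by
    rw [Finset.sum_range_sub]
    rfl
  have htri : vnorm (Θ (k+1) - θ0) ≤ ∑ s ∈ Finset.range (k+1), vnorm (Θ (s+1) - Θ s) := by
    rw [tele, vnorm_eq, map_sum]
    refine le_trans (norm_sum_le _ _) (le_of_eq ?_)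
    exact Finset.sum_congr rfl fun s _ => (vnorm_eq _).symm
  have hsum2 : ∑ s ∈ Finset.range (k+1), vnorm (Θ (s+1) - Θ s) ≤
      ∑ s ∈ Finset.range (k+1), (η * ((3/2) * (q^s * R0) / Real.sqrt lam0)) :=
    Finset.sum_le_sum fun s hs => step s (Nat.lt_succ_iff.mp (Finset.mem_range.mp hs))
  have hsum3 : ∑ s ∈ Finset.range (k+1), (η * ((3/2) * (q^s * R0) / Real.sqrt lam0)) ≤
      3 * R0 / Real.sqrt lam0 := by
    have hfac : ∀ s ∈ Finset.range (k+1),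
        η * ((3/2) * (q^s * R0) / Real.sqrt lam0) =
          (η * (3/2) * R0 / Real.sqrt lam0) * q^s := by
      intro s _; field_simp
    rw [Finset.sum_congr rfl hfac, ← Finset.mul_sum]
    set S := ∑ s ∈ Finset.range (k+1), q^s with hSdef
    have hS0 : 0 ≤ S := Finset.sum_nonneg fun s _ => pow_nonneg hq0 s
    have hSle : S * (1 - q) ≤ 1 := by
      have hg := geom_sum_mul q (k+1)
      nlinarith [pow_nonneg hq0 (k+1)]
    have hη2 : η * S ≤ 2 := by
      nlinarith [mul_le_mul_of_nonneg_left hSle (by linarith : (0:ℝ) ≤ 1 + q)]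
    have hx : 0 ≤ R0 / Real.sqrt lam0 := div_nonneg hR0 hsl0.le
    calc (η * (3/2) * R0 / Real.sqrt lam0) * S = (η * S) * (3/2) * (R0 / Real.sqrt lam0) := by
          ring
    _ ≤ 3 * (R0 / Real.sqrt lam0) := by nlinarith [hη2, hx]
    _ = 3 * R0 / Real.sqrt lam0 := by ring
  exact le_trans htri (le_trans hsum2 hsum3)
end

section
/- Suppose the network is linear in its parameters, i.e., u(w) = u(w(0)) + J·(w - w(0)) for a fixed matrix J ∈ ℝ^{n×p} with G = JJᵀ invertible. Let w_GD solve the gradient flow w'(t) = Jᵀ(y - u(w(t))) and w_NGD solve the natural gradient flow w'(t) = Jᵀ G⁻¹ (y - u(w(t))), both from the same initialization w(0). Then w_GD(t) = Jᵀ G⁻¹ (I - exp(-Gt))(y - u(w(0))) + w(0) and w_NGD(t) = (1 - e^{-t})·JᵀG⁻¹(y - u(w(0))) + w(0), and the two flows converge to the same limit: lim_{t→∞} w_GD(t) = lim_{t→∞} w_NGD(t) = Jᵀ G⁻¹ (y - u(w(0))) + w(0). -/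
open Matrix MeasureTheory ProbabilityTheory Real
open scoped BigOperators ENNReal NNReal

section AuxLemmas

lemma expEntryDeriv {n : ℕ} (G : Matrix (Fin n) (Fin n) ℝ) (t : ℝ) (i j : Fin n) :
    HasDerivAt (fun s : ℝ => NormedSpace.exp (s • G) i j)
      ((NormedSpace.exp (t • G) * G) i j) t := by
  letI : SeminormedRing (Matrix (Fin n) (Fin n) ℝ) := Matrix.linftyOpSemiNormedRing
  letI : NormedRing (Matrix (Fin n) (Fin n) ℝ) := Matrix.linftyOpNormedRing
  letI : NormedAlgebra ℝ (Matrix (Fin n) (Fin n) ℝ) := Matrix.linftyOpNormedAlgebra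
  have h := hasDerivAt_exp_smul_const (𝕂 := ℝ) G t
  let e0 : Matrix (Fin n) (Fin n) ℝ →ₗ[ℝ] ℝ :=
    { toFun := fun A => A i j, map_add' := by intros; rfl, map_smul' := by intros; rfl }
  let e : Matrix (Fin n) (Fin n) ℝ →L[ℝ] ℝ :=
    { toLinearMap := e0, cont := LinearMap.continuous_of_finiteDimensional e0 }
  exact e.hasFDerivAt.comp_hasDerivAt t h

lemma hasDerivAt_mulVec' {k m : ℕ} (A : Matrix (Fin k) (Fin m) ℝ)
    {f : ℝ → Fin m → ℝ} {f' : Fin m → ℝ} {t : ℝ} (hf : HasDerivAt f f' t) :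
    HasDerivAt (fun s => A *ᵥ f s) (A *ᵥ f') t := by
  rw [hasDerivAt_pi] at hf ⊢
  intro i
  simpa [Matrix.mulVec, dotProduct] using
    HasDerivAt.fun_sum (fun j (_ : j ∈ Finset.univ) => ((hf j).const_mul (A i j)))

lemma const_of_deriv_zero {f : ℝ → ℝ} (h : ∀ t, HasDerivAt f 0 t) (t : ℝ) : f t = f 0 :=
  is_const_of_deriv_eq_zero (fun x => (h x).differentiableAt) (fun x => (h x).deriv) t 0

lemma dot_self_eq_zero' {k : ℕ} {v : Fin k → ℝ} (h : v ⬝ᵥ v = 0) : v = 0 := by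
  funext i
  have h2 : ∀ j ∈ Finset.univ, (0:ℝ) ≤ v j * v j := fun j _ => mul_self_nonneg _
  have := (Finset.sum_eq_zero_iff_of_nonneg h2).mp h i (Finset.mem_univ i)
  simpa [mul_self_eq_zero] using this

lemma dot_self_nonneg' {k : ℕ} (v : Fin k → ℝ) : 0 ≤ v ⬝ᵥ v :=
  Finset.sum_nonneg fun j _ => mul_self_nonneg _

lemma rayleigh_lower_bound {n : ℕ} (G : Matrix (Fin n) (Fin n) ℝ)
    (hpd : ∀ x : Fin n → ℝ, x ≠ 0 → 0 < x ⬝ᵥ (G *ᵥ x)) :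
    ∃ c : ℝ, 0 < c ∧ ∀ x : Fin n → ℝ, c * (x ⬝ᵥ x) ≤ x ⬝ᵥ (G *ᵥ x) := by
  rcases Nat.eq_zero_or_pos n with hn | hn
  · subst hn
    exact ⟨1, one_pos, fun x => by simp [dotProduct]⟩
  · set φ : (Fin n → ℝ) → ℝ := fun x => x ⬝ᵥ (G *ᵥ x) with hφdef
    have hφ : Continuous φ := by
      simp only [hφdef, dotProduct, Matrix.mulVec]
      exact continuous_finset_sum _ fun i _ =>
        (continuous_apply i).mul (continuous_finset_sum _ fun j _ =>
          continuous_const.mul (continuous_apply j))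
    set S : Set (Fin n → ℝ) := {x | x ⬝ᵥ x = 1} with hSdef
    have hdotcont : Continuous fun x : Fin n → ℝ => x ⬝ᵥ x := by
      simp only [dotProduct]
      exact continuous_finset_sum _ fun i _ => (continuous_apply i).mul (continuous_apply i)
    have hclosed : IsClosed S := isClosed_eq hdotcont continuous_const
    have hbdd : Bornology.IsBounded S := by
      apply (Metric.isBounded_iff_subset_closedBall 0).mpr
      refine ⟨1, fun x hx => ?_⟩
      have hx1 : x ⬝ᵥ x = 1 := hx
      simp only [Metric.mem_closedBall, dist_zero_right]
      rw [pi_norm_le_iff_of_nonneg zero_le_one]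
      intro i
      rw [Real.norm_eq_abs, abs_le_one_iff_mul_self_le_one]
      calc x i * x i ≤ ∑ j, x j * x j :=
            Finset.single_le_sum (fun j _ => mul_self_nonneg (x j)) (Finset.mem_univ i)
        _ = 1 := hx1
    have hcompact : IsCompact S := Metric.isCompact_of_isClosed_isBounded hclosed hbdd
    have hne : S.Nonempty := by
      haveI : NeZero n := ⟨hn.ne'⟩
      refine ⟨Pi.single (0 : Fin n) (1:ℝ), ?_⟩
      simp [hSdef, dotProduct, Pi.single_apply]
    obtain ⟨x₀, hx₀S, hmin⟩ := hcompact.exists_isMinOn hne hφ.continuousOn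
    have hx₀ne : x₀ ≠ 0 := by
      intro h0
      rw [h0] at hx₀S
      simp [hSdef, dotProduct] at hx₀S
    refine ⟨φ x₀, hpd x₀ hx₀ne, fun x => ?_⟩
    by_cases hx0 : x = 0
    · simp [hx0, hφdef, dotProduct]
    · have hd : 0 < x ⬝ᵥ x :=
        lt_of_le_of_ne (dot_self_nonneg' x) (fun h => hx0 (dot_self_eq_zero' h.symm))
      set s : ℝ := (Real.sqrt (x ⬝ᵥ x))⁻¹ with hs
      have hss : s * s = (x ⬝ᵥ x)⁻¹ := by
        rw [hs, ← mul_inv, Real.mul_self_sqrt hd.le]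
      have hmem : s • x ∈ S := by
        show (s • x) ⬝ᵥ (s • x) = 1
        rw [smul_dotProduct, dotProduct_smul]
        rw [smul_eq_mul, smul_eq_mul, ← mul_assoc, hss]
        exact inv_mul_cancel₀ hd.ne'
      have hle := hmin hmem
      have hφs : φ (s • x) = (s * s) * φ x := by
        simp only [hφdef]
        rw [Matrix.mulVec_smul, smul_dotProduct, dotProduct_smul]
        simp [smul_eq_mul, mul_assoc]
      rw [Set.mem_setOf_eq] at hle
      have hle2 : φ x₀ ≤ (x ⬝ᵥ x)⁻¹ * φ x := by
        rw [← hss, ← hφs]; exact hle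
      calc φ x₀ * (x ⬝ᵥ x) ≤ ((x ⬝ᵥ x)⁻¹ * φ x) * (x ⬝ᵥ x) :=
            mul_le_mul_of_nonneg_right hle2 hd.le
        _ = φ x := by field_simp

end AuxLemmas

/-- **Lemma (trajectories of GD and NGD flows on a linearized network).**
For a network that is linear in its parameters, `u(w) = u(w(0)) + J(w - w(0))` with
`G = JJᵀ` invertible, the gradient flow and natural gradient flow started at `w(0)`
satisfy `w_GD(t) = JᵀG⁻¹(I - exp(-Gt))(y - u(w(0))) + w(0)` and
`w_NGD(t) = (1 - e^{-t}) JᵀG⁻¹(y - u(w(0))) + w(0)`, and both converge to the same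
limit `JᵀG⁻¹(y - u(w(0))) + w(0)` as `t → ∞`. -/
theorem gd_ngd_flow_linear_network {n p : ℕ}
    (J : Matrix (Fin n) (Fin p) ℝ) (hG : IsUnit (J * Jᵀ))
    (w0 : Fin p → ℝ) (y : Fin n → ℝ)
    (u : (Fin p → ℝ) → Fin n → ℝ)
    (hu : ∀ w : Fin p → ℝ, u w = u w0 + J *ᵥ (w - w0))
    (wGD wNGD : ℝ → Fin p → ℝ)
    (hGD0 : wGD 0 = w0) (hNGD0 : wNGD 0 = w0)
    (hGD : ∀ t : ℝ, HasDerivAt wGD (Jᵀ *ᵥ (y - u (wGD t))) t)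
    (hNGD : ∀ t : ℝ,
      HasDerivAt wNGD (Jᵀ *ᵥ ((J * Jᵀ)⁻¹ *ᵥ (y - u (wNGD t)))) t) :
    (∀ t : ℝ, wGD t =
        Jᵀ *ᵥ ((J * Jᵀ)⁻¹ *ᵥ
          ((1 - NormedSpace.exp (-(t • (J * Jᵀ)))) *ᵥ (y - u w0))) + w0) ∧
      (∀ t : ℝ, wNGD t =
        (1 - Real.exp (-t)) • (Jᵀ *ᵥ ((J * Jᵀ)⁻¹ *ᵥ (y - u w0))) + w0) ∧
      Filter.Tendsto wGD Filter.atTop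
        (nhds (Jᵀ *ᵥ ((J * Jᵀ)⁻¹ *ᵥ (y - u w0)) + w0)) ∧
      Filter.Tendsto wNGD Filter.atTop
        (nhds (Jᵀ *ᵥ ((J * Jᵀ)⁻¹ *ᵥ (y - u w0)) + w0)) := by
  set G := J * Jᵀ with hGdef
  have hGdet : IsUnit G.det := (Matrix.isUnit_iff_isUnit_det G).mp hG
  have hG1 : G⁻¹ * G = 1 := Matrix.nonsing_inv_mul G hGdet
  have hG2 : G * G⁻¹ = 1 := Matrix.mul_nonsing_inv G hGdet
  set b : Fin n → ℝ := y - u w0 with hbdef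
  set r : ℝ → Fin n → ℝ := fun t => y - u (wGD t) with hrdef
  have hr0 : r 0 = b := by rw [hrdef]; simp [hGD0, hbdef]
  have hrt : ∀ t, r t = b - J *ᵥ (wGD t - w0) := by
    intro t
    rw [hrdef]
    simp only
    rw [hu (wGD t), hbdef]
    abel
  have hr' : ∀ t, HasDerivAt r (-(G *ᵥ r t)) t := by
    intro t
    have h1 : HasDerivAt (fun s => wGD s - w0) (Jᵀ *ᵥ r t) t := (hGD t).sub_const w0
    have h2 := hasDerivAt_mulVec' J h1
    have h3 : HasDerivAt (fun s => b - J *ᵥ (wGD s - w0)) (-(J *ᵥ (Jᵀ *ᵥ r t))) t :=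
      h2.const_sub b
    have heq : (fun s => b - J *ᵥ (wGD s - w0)) = r := by funext s; rw [hrt s]
    rw [heq] at h3
    simpa [Matrix.mulVec_mulVec, hGdef] using h3
  -- constancy of exp(tG) r t
  have hqconst : ∀ t, NormedSpace.exp (t • G) *ᵥ r t = b := by
    have key : ∀ (i : Fin n) (t : ℝ), (NormedSpace.exp (t • G) *ᵥ r t) i = b i := by
      intro i t
      have hder : ∀ s : ℝ, HasDerivAt (fun s' => (NormedSpace.exp (s' • G) *ᵥ r s') i) 0 s := by
        intro s
        have hcomp : ∀ j : Fin n, HasDerivAt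
            (fun s' => NormedSpace.exp (s' • G) i j * r s' j)
            ((NormedSpace.exp (s • G) * G) i j * r s j
              + NormedSpace.exp (s • G) i j * (-(G *ᵥ r s)) j) s :=
          fun j => (expEntryDeriv G s i j).mul ((hasDerivAt_pi.1 (hr' s)) j)
        have hsum := HasDerivAt.fun_sum (fun j (_ : j ∈ Finset.univ) => hcomp j)
        have hfun : (fun s' => ∑ j, NormedSpace.exp (s' • G) i j * r s' j)
            = fun s' => (NormedSpace.exp (s' • G) *ᵥ r s') i := by
          funext s'; simp [Matrix.mulVec, dotProduct]
        have hval : (∑ j, ((NormedSpace.exp (s • G) * G) i j * r s j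
              + NormedSpace.exp (s • G) i j * (-(G *ᵥ r s)) j)) = 0 := by
          rw [Finset.sum_add_distrib]
          have e1 : (∑ j, (NormedSpace.exp (s • G) * G) i j * r s j)
              = ((NormedSpace.exp (s • G) * G) *ᵥ r s) i := by
            simp [Matrix.mulVec, dotProduct]
          have e2 : (∑ j, NormedSpace.exp (s • G) i j * (-(G *ᵥ r s)) j)
              = (NormedSpace.exp (s • G) *ᵥ (-(G *ᵥ r s))) i := by
            simp [Matrix.mulVec, dotProduct]
          rw [e1, e2, Matrix.mulVec_neg, ← Matrix.mulVec_mulVec]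
          simp
        rw [hfun] at hsum
        rw [hval] at hsum
        exact hsum
      have := const_of_deriv_zero hder t
      rw [this]
      simp [hr0]
    intro t; funext i; exact key i t
  -- r t = exp(-(t•G)) b
  have hrF : ∀ t : ℝ, r t = NormedSpace.exp (-(t • G)) *ᵥ b := by
    intro t
    have hcomm : Commute (-(t • G)) (t • G) := (Commute.refl (t • G)).neg_left
    have hmul : NormedSpace.exp (-(t • G)) * NormedSpace.exp (t • G) = 1 := by
      rw [← Matrix.exp_add_of_commute _ _ hcomm]
      simp
    calc r t = 1 *ᵥ r t := (Matrix.one_mulVec _).symm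
      _ = (NormedSpace.exp (-(t • G)) * NormedSpace.exp (t • G)) *ᵥ r t := by rw [hmul]
      _ = NormedSpace.exp (-(t • G)) *ᵥ (NormedSpace.exp (t • G) *ᵥ r t) := by
          rw [Matrix.mulVec_mulVec]
      _ = NormedSpace.exp (-(t • G)) *ᵥ b := by rw [hqconst t]
  -- derivative of F s *ᵥ b where F s = exp (-(s•G))
  have hFb' : ∀ t : ℝ, HasDerivAt (fun s => NormedSpace.exp (-(s • G)) *ᵥ b)
      ((NormedSpace.exp (-(t • G)) * (-G)) *ᵥ b) t := by
    intro t
    have h1 : ∀ j l : Fin n, HasDerivAt (fun s : ℝ => NormedSpace.exp (-(s • G)) j l)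
        ((NormedSpace.exp (-(t • G)) * (-G)) j l) t := by
      intro j l
      have := expEntryDeriv (-G) t j l
      simpa [smul_neg] using this
    rw [hasDerivAt_pi]
    intro j
    have hsum := HasDerivAt.fun_sum (fun l (_ : l ∈ Finset.univ) =>
      (h1 j l).mul_const (b l))
    simpa [Matrix.mulVec, dotProduct] using hsum
  -- the GD formula
  have hcomm2 : ∀ t : ℝ, NormedSpace.exp (-(t • G)) * G = G * NormedSpace.exp (-(t • G)) := by
    intro t
    have hc : Commute (-(t • G)) G := by
      rw [← neg_smul t G]; exact (Commute.refl G).smul_left (-t)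
    exact (hc.exp_left).eq
  have hGDform : ∀ t : ℝ, wGD t
      = Jᵀ *ᵥ (G⁻¹ *ᵥ ((1 - NormedSpace.exp (-(t • G))) *ᵥ b)) + w0 := by
    set c : ℝ → Fin p → ℝ :=
      fun s => Jᵀ *ᵥ (G⁻¹ *ᵥ ((1 - NormedSpace.exp (-(s • G))) *ᵥ b)) + w0 with hcdef
    have hc' : ∀ t : ℝ, HasDerivAt c (Jᵀ *ᵥ (NormedSpace.exp (-(t • G)) *ᵥ b)) t := by
      intro t
      have h1 : HasDerivAt (fun s : ℝ => (1 - NormedSpace.exp (-(s • G))) *ᵥ b)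
          (-((NormedSpace.exp (-(t • G)) * (-G)) *ᵥ b)) t := by
        have heq : (fun s : ℝ => (1 - NormedSpace.exp (-(s • G))) *ᵥ b)
            = fun s : ℝ => b - NormedSpace.exp (-(s • G)) *ᵥ b := by
          funext s; rw [Matrix.sub_mulVec, Matrix.one_mulVec]
        rw [heq]
        exact (hFb' t).const_sub b
      have h2 := hasDerivAt_mulVec' Jᵀ (hasDerivAt_mulVec' G⁻¹ h1)
      have h3 := h2.add_const w0
      rw [← hcdef] at h3
      have hval : Jᵀ *ᵥ (G⁻¹ *ᵥ (-((NormedSpace.exp (-(t • G)) * (-G)) *ᵥ b)))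
          = Jᵀ *ᵥ (NormedSpace.exp (-(t • G)) *ᵥ b) := by
        have e1 : -((NormedSpace.exp (-(t • G)) * (-G)) *ᵥ b)
            = (G * NormedSpace.exp (-(t • G))) *ᵥ b := by
          rw [mul_neg, Matrix.neg_mulVec, neg_neg, hcomm2 t]
        rw [e1, ← Matrix.mulVec_mulVec, Matrix.mulVec_mulVec _ G⁻¹ G, hG1, Matrix.one_mulVec]
      rw [hval] at h3
      exact h3
    have hdiff : ∀ (k : Fin p) (t : ℝ),
        HasDerivAt (fun s => wGD s k - c s k) 0 t := by
      intro k t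
      have h1 := (hasDerivAt_pi.1 (hGD t)) k
      have h2 := (hasDerivAt_pi.1 (hc' t)) k
      have h3 := h1.sub h2
      have heq0 : (Jᵀ *ᵥ (y - u (wGD t))) k - (Jᵀ *ᵥ (NormedSpace.exp (-(t • G)) *ᵥ b)) k = 0 := by
        have : y - u (wGD t) = NormedSpace.exp (-(t • G)) *ᵥ b := hrF t
        rw [this]; ring
      rwa [heq0] at h3
    intro t
    funext k
    have h0 : wGD 0 k - c 0 k = 0 := by
      rw [hGD0, hcdef]
      simp
    have hconst := const_of_deriv_zero (hdiff k) t
    rw [h0] at hconst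
    exact sub_eq_zero.mp hconst
  -- positivity
  have hdotG : ∀ x : Fin n → ℝ, x ⬝ᵥ (G *ᵥ x) = (Jᵀ *ᵥ x) ⬝ᵥ (Jᵀ *ᵥ x) := by
    intro x
    rw [hGdef, ← Matrix.mulVec_mulVec, dotProduct_mulVec, ← Matrix.mulVec_transpose]
  have hpd : ∀ x : Fin n → ℝ, x ≠ 0 → 0 < x ⬝ᵥ (G *ᵥ x) := by
    intro x hx
    have h0 : 0 ≤ x ⬝ᵥ (G *ᵥ x) := by rw [hdotG]; exact dot_self_nonneg' _
    refine lt_of_le_of_ne h0 fun h => hx ?_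
    have hJx : Jᵀ *ᵥ x = 0 := by
      apply dot_self_eq_zero'
      rw [← hdotG]; exact h.symm
    have hGx : G *ᵥ x = 0 := by
      rw [hGdef, ← Matrix.mulVec_mulVec, hJx, Matrix.mulVec_zero]
    calc x = 1 *ᵥ x := (Matrix.one_mulVec x).symm
      _ = (G⁻¹ * G) *ᵥ x := by rw [hG1]
      _ = G⁻¹ *ᵥ (G *ᵥ x) := (Matrix.mulVec_mulVec x G⁻¹ G).symm
      _ = 0 := by rw [hGx, Matrix.mulVec_zero]
  obtain ⟨cst, hcst, hray⟩ := rayleigh_lower_bound G hpd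
  -- f and decay
  set f : ℝ → ℝ := fun t => r t ⬝ᵥ r t with hfdef
  have hfnonneg : ∀ t, 0 ≤ f t := fun t => dot_self_nonneg' _
  have hf' : ∀ t, HasDerivAt f (-2 * (r t ⬝ᵥ (G *ᵥ r t))) t := by
    intro t
    have h1 : ∀ i : Fin n, HasDerivAt (fun s => r s i * r s i)
        ((-(G *ᵥ r t)) i * r t i + r t i * (-(G *ᵥ r t)) i) t :=
      fun i => ((hasDerivAt_pi.1 (hr' t)) i).mul ((hasDerivAt_pi.1 (hr' t)) i)
    have hsum := HasDerivAt.fun_sum (fun i (_ : i ∈ Finset.univ) => h1 i)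
    have hfun : (fun s => ∑ i, r s i * r s i) = f := by
      funext s; simp [hfdef, dotProduct]
    have hval : (∑ i, ((-(G *ᵥ r t)) i * r t i + r t i * (-(G *ᵥ r t)) i))
        = -2 * (r t ⬝ᵥ (G *ᵥ r t)) := by
      rw [Finset.sum_add_distrib]
      have e1 : (∑ i, (-(G *ᵥ r t)) i * r t i) = (-(G *ᵥ r t)) ⬝ᵥ r t := rfl
      have e2 : (∑ i, r t i * (-(G *ᵥ r t)) i) = r t ⬝ᵥ (-(G *ᵥ r t)) := rfl
      rw [e1, e2, neg_dotProduct, dotProduct_neg, dotProduct_comm]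
      ring
    rw [hfun, hval] at hsum
    exact hsum
  set g : ℝ → ℝ := fun t => Real.exp (2 * cst * t) * f t with hgdef
  have hg' : ∀ t, HasDerivAt g
      (Real.exp (2 * cst * t) * (2 * cst) * f t
        + Real.exp (2 * cst * t) * (-2 * (r t ⬝ᵥ (G *ᵥ r t)))) t := by
    intro t
    have harg : HasDerivAt (fun s : ℝ => 2 * cst * s) (2 * cst) t := by
      simpa using (hasDerivAt_id t).const_mul (2 * cst)
    have he : HasDerivAt (fun s : ℝ => Real.exp (2 * cst * s))
        (Real.exp (2 * cst * t) * (2 * cst)) t :=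
      (Real.hasDerivAt_exp (2 * cst * t)).comp t harg
    exact he.mul (hf' t)
  have hganti : Antitone g := by
    apply antitone_of_deriv_nonpos
    · intro t; exact (hg' t).differentiableAt
    · intro t
      rw [(hg' t).deriv]
      have hb1 : cst * f t ≤ r t ⬝ᵥ (G *ᵥ r t) := hray (r t)
      nlinarith [Real.exp_pos (2 * cst * t), hfnonneg t]
  have hdecay : ∀ t : ℝ, 0 ≤ t → f t ≤ Real.exp (-(2 * cst * t)) * f 0 := by
    intro t ht
    have h1 : g t ≤ g 0 := hganti ht
    have h2 : g 0 = f 0 := by rw [hgdef]; simp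
    have h3 : Real.exp (2 * cst * t) * f t ≤ f 0 := by rw [← h2]; exact h1
    calc f t = Real.exp (-(2 * cst * t)) * (Real.exp (2 * cst * t) * f t) := by
          rw [← mul_assoc, ← Real.exp_add]; simp
      _ ≤ Real.exp (-(2 * cst * t)) * f 0 :=
          mul_le_mul_of_nonneg_left h3 (Real.exp_pos _).le
  have hftend : Filter.Tendsto f Filter.atTop (nhds 0) := by
    have h1 : Filter.Tendsto (fun t : ℝ => 2 * cst * t) Filter.atTop Filter.atTop :=
      Filter.Tendsto.const_mul_atTop (by positivity) Filter.tendsto_id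
    have h2 : Filter.Tendsto (fun t : ℝ => Real.exp (-(2 * cst * t))) Filter.atTop (nhds 0) :=
      Real.tendsto_exp_neg_atTop_nhds_zero.comp h1
    have hexp : Filter.Tendsto (fun t : ℝ => Real.exp (-(2 * cst * t)) * f 0)
        Filter.atTop (nhds 0) := by
      simpa using h2.mul_const (f 0)
    apply tendsto_of_tendsto_of_tendsto_of_le_of_le' tendsto_const_nhds hexp
    · exact Filter.Eventually.of_forall hfnonneg
    · exact Filter.eventually_atTop.2 ⟨0, hdecay⟩
  have hrtend : ∀ i : Fin n, Filter.Tendsto (fun t => r t i) Filter.atTop (nhds 0) := by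
    intro i
    have habs : ∀ t, |r t i| ≤ Real.sqrt (f t) := by
      intro t
      rw [← Real.sqrt_mul_self_eq_abs]
      apply Real.sqrt_le_sqrt
      have : r t i * r t i ≤ ∑ j, r t j * r t j :=
        Finset.single_le_sum (fun j _ => mul_self_nonneg (r t j)) (Finset.mem_univ i)
      simpa [hfdef, dotProduct] using this
    have hsq : Filter.Tendsto (fun t => Real.sqrt (f t)) Filter.atTop (nhds 0) := by
      have := (Real.continuous_sqrt.tendsto 0).comp hftend
      simp at this; exact this
    have hnsq : Filter.Tendsto (fun t => -Real.sqrt (f t)) Filter.atTop (nhds 0) := by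
      simpa using hsq.neg
    apply tendsto_of_tendsto_of_tendsto_of_le_of_le' hnsq hsq
    · exact Filter.Eventually.of_forall (fun t => (abs_le.1 (habs t)).1)
    · exact Filter.Eventually.of_forall (fun t => (abs_le.1 (habs t)).2)
  -- GD limit
  have hGDtend : Filter.Tendsto wGD Filter.atTop (nhds (Jᵀ *ᵥ (G⁻¹ *ᵥ b) + w0)) := by
    set M := Jᵀ * G⁻¹ with hMdef
    have hwform : ∀ t, wGD t = M *ᵥ b - M *ᵥ r t + w0 := by
      intro t
      rw [hGDform t]
      have e1 : (1 - NormedSpace.exp (-(t • G))) *ᵥ b = b - r t := by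
        rw [Matrix.sub_mulVec, Matrix.one_mulVec, hrF t]
      rw [e1, Matrix.mulVec_sub, Matrix.mulVec_sub, Matrix.mulVec_mulVec, Matrix.mulVec_mulVec]
    rw [tendsto_pi_nhds]
    intro k
    have hsumtend : Filter.Tendsto (fun t => ∑ j, M k j * r t j) Filter.atTop (nhds 0) := by
      have h1 : ∀ j : Fin n, Filter.Tendsto (fun t => M k j * r t j) Filter.atTop (nhds 0) := by
        intro j
        simpa using (hrtend j).const_mul (M k j)
      have := tendsto_finset_sum (Finset.univ : Finset (Fin n)) (fun j _ => h1 j)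
      simpa using this
    have h2 : Filter.Tendsto (fun t => (M *ᵥ b) k - ∑ j, M k j * r t j + w0 k)
        Filter.atTop (nhds ((M *ᵥ b) k - 0 + w0 k)) :=
      (tendsto_const_nhds.sub hsumtend).add tendsto_const_nhds
    have h3 : Filter.Tendsto (fun t => wGD t k) Filter.atTop (nhds ((M *ᵥ b) k - 0 + w0 k)) := by
      apply h2.congr
      intro t
      rw [hwform t]
      simp [Matrix.mulVec, dotProduct]
    have h4 : (Jᵀ *ᵥ (G⁻¹ *ᵥ b) + w0) k = (M *ᵥ b) k - 0 + w0 k := by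
      rw [Matrix.mulVec_mulVec]
      simp [hMdef]
    rw [h4]
    exact h3
  -- NGD part
  set r2 : ℝ → Fin n → ℝ := fun t => y - u (wNGD t) with hr2def
  have hr20 : r2 0 = b := by rw [hr2def]; simp [hNGD0, hbdef]
  have hr2t : ∀ t, r2 t = b - J *ᵥ (wNGD t - w0) := by
    intro t
    rw [hr2def]
    simp only
    rw [hu (wNGD t), hbdef]
    abel
  have hr2' : ∀ t, HasDerivAt r2 (-(r2 t)) t := by
    intro t
    have h1 : HasDerivAt (fun s => wNGD s - w0) (Jᵀ *ᵥ (G⁻¹ *ᵥ r2 t)) t := (hNGD t).sub_const w0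
    have h2 := (hasDerivAt_mulVec' J h1).const_sub b
    have heq : (fun s => b - J *ᵥ (wNGD s - w0)) = r2 := by funext s; rw [hr2t s]
    rw [heq] at h2
    have hval : J *ᵥ (Jᵀ *ᵥ (G⁻¹ *ᵥ r2 t)) = r2 t := by
      rw [Matrix.mulVec_mulVec, ← hGdef, Matrix.mulVec_mulVec, hG2, Matrix.one_mulVec]
    rwa [hval] at h2
  have hr2F : ∀ t, r2 t = Real.exp (-t) • b := by
    have key : ∀ (i : Fin n) (t : ℝ), Real.exp t * r2 t i = b i := by
      intro i t
      have hder : ∀ s : ℝ, HasDerivAt (fun s' => Real.exp s' * r2 s' i) 0 s := by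
        intro s
        have h1 := (Real.hasDerivAt_exp s).mul ((hasDerivAt_pi.1 (hr2' s)) i)
        have hval : Real.exp s * r2 s i + Real.exp s * (-(r2 s)) i = 0 := by
          simp only [Pi.neg_apply]; ring
        rwa [hval] at h1
      have := const_of_deriv_zero hder t
      rw [this]
      simp [hr20]
    intro t; funext i
    have hk := key i t
    have h2 : r2 t i = Real.exp (-t) * b i := by
      rw [← hk, Real.exp_neg]
      field_simp
    simpa using h2
  have hNGDform : ∀ t : ℝ, wNGD t = (1 - Real.exp (-t)) • (Jᵀ *ᵥ (G⁻¹ *ᵥ b)) + w0 := by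
    set v : Fin p → ℝ := Jᵀ *ᵥ (G⁻¹ *ᵥ b) with hvdef
    have hdiff : ∀ (k : Fin p) (t : ℝ),
        HasDerivAt (fun s => wNGD s k - ((1 - Real.exp (-s)) * v k + w0 k)) 0 t := by
      intro k t
      have h1 := (hasDerivAt_pi.1 (hNGD t)) k
      have hval1 : (Jᵀ *ᵥ (G⁻¹ *ᵥ (y - u (wNGD t)))) k = Real.exp (-t) * v k := by
        have hy : y - u (wNGD t) = Real.exp (-t) • b := hr2F t
        rw [hy, Matrix.mulVec_smul, Matrix.mulVec_smul, hvdef]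
        simp
      rw [hval1] at h1
      have hexp : HasDerivAt (fun s : ℝ => Real.exp (-s)) (-Real.exp (-t)) t := by
        have := (Real.hasDerivAt_exp (-t)).comp t (hasDerivAt_neg t)
        simp at this; exact this
      have h2 : HasDerivAt (fun s : ℝ => (1 - Real.exp (-s)) * v k + w0 k)
          (Real.exp (-t) * v k) t := by
        have := ((hexp.const_sub 1).mul_const (v k)).add_const (w0 k)
        simpa using this
      have h3 := h1.sub h2
      simp at h3; exact h3
    intro t
    funext k
    have h0 : wNGD 0 k - ((1 - Real.exp (-(0:ℝ))) * v k + w0 k) = 0 := by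
      rw [hNGD0]
      simp
    have hconst := const_of_deriv_zero (hdiff k) t
    rw [h0] at hconst
    have := sub_eq_zero.mp hconst
    rw [this]
    simp [hvdef]
  have hNGDtend : Filter.Tendsto wNGD Filter.atTop (nhds (Jᵀ *ᵥ (G⁻¹ *ᵥ b) + w0)) := by
    have h1 : Filter.Tendsto (fun t : ℝ => 1 - Real.exp (-t)) Filter.atTop (nhds 1) := by
      have := (tendsto_const_nhds (α := ℝ) (x := (1:ℝ)) (f := Filter.atTop)).sub
        Real.tendsto_exp_neg_atTop_nhds_zero
      simpa using this
    have h2 := (h1.smul_const (Jᵀ *ᵥ (G⁻¹ *ᵥ b))).add_const w0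
    rw [one_smul] at h2
    apply h2.congr
    intro t
    exact (hNGDform t).symm
  exact ⟨hGDform, hNGDform, hGDtend, hNGDtend⟩
end
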